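/- Let (a_k)_{k≥1} be a sequence of nonnegative real numbers with Σ_{k=1}^∞ (k−1/2)² a_k² < ∞. Then (Σ_{k=1}^∞ a_k)² ≤ π·(Σ_{k=1}^∞ a_k²)^{1/2}·(Σ_{k=1}^∞ (k−1/2)² a_k²)^{1/2}. -/

import Mathlib

open Real

section CarlsonLandauAux

open Complex intervalIntegral

lemma integral_key (d : ℝ) (hd : 0 < d) (n : ℤ) :
    (∫ x in (0:ℝ)..2*π, Complex.exp (-(Complex.I*n*x)) * Complex.cosh (d * (x - π))) =
      2 * d * Complex.sinh (π * d) / ((d:ℂ)^2 + (n:ℂ)^2) := by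
  have h1 : ((d:ℂ) - Complex.I*n) ≠ 0 := by
    intro h
    have := congrArg Complex.re h
    simp at this
    linarith
  have h2 : (-(d:ℂ) - Complex.I*n) ≠ 0 := by
    intro h
    have := congrArg Complex.re h
    simp at this
    linarith
  have hre : ∀ x : ℝ, Complex.exp (-(Complex.I*n*x)) * Complex.cosh (d * (x - π))
      = (Complex.exp (((d:ℂ) - Complex.I*n) * x) * Complex.exp (-((d:ℂ)*π))
        + Complex.exp ((-(d:ℂ) - Complex.I*n) * x) * Complex.exp ((d:ℂ)*π)) / 2 := by
    intro x
    simp only [Complex.cosh, mul_div_assoc', mul_add, ← Complex.exp_add]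
    ring_nf
  rw [intervalIntegral.integral_congr (g := fun x : ℝ =>
      (Complex.exp (((d:ℂ) - Complex.I*n) * x) * Complex.exp (-((d:ℂ)*π))
        + Complex.exp ((-(d:ℂ) - Complex.I*n) * x) * Complex.exp ((d:ℂ)*π)) / 2)
      (fun x _ => hre x)]
  rw [intervalIntegral.integral_div, intervalIntegral.integral_add
      (by apply Continuous.intervalIntegrable; fun_prop)
      (by apply Continuous.intervalIntegrable; fun_prop),
    intervalIntegral.integral_mul_const, intervalIntegral.integral_mul_const,
    integral_exp_mul_complex h1, integral_exp_mul_complex h2]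
  have e1 : ((d:ℂ) - Complex.I*n) * (2*π : ℝ) = 2*(π:ℂ)*d + ((-n : ℤ) : ℂ) * (2*π*Complex.I) := by
    push_cast; ring
  have e2 : (-(d:ℂ) - Complex.I*n) * (2*π : ℝ) = -(2*(π:ℂ)*d) + ((-n : ℤ) : ℂ) * (2*π*Complex.I) := by
    push_cast; ring
  rw [e1, e2, Complex.exp_add, Complex.exp_add, Complex.exp_int_mul_two_pi_mul_I]
  simp only [Complex.ofReal_zero, mul_zero, Complex.exp_zero, mul_one]
  -- now pure algebra
  set t : ℂ := Complex.exp ((π:ℂ)*d) with ht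
  have hexp1 : Complex.exp (2*(π:ℂ)*d) = t * t := by
    rw [ht, ← Complex.exp_add]; ring_nf
  have hexp2 : Complex.exp (-(2*(π:ℂ)*d)) = (t*t)⁻¹ := by
    rw [Complex.exp_neg, hexp1]
  have hexp4 : Complex.exp ((d:ℂ)*π) = t := by rw [ht, mul_comm]
  have hexp3 : Complex.exp (-((d:ℂ)*π)) = t⁻¹ := by
    rw [Complex.exp_neg, hexp4]
  have hsinh : Complex.sinh ((π:ℂ)*d) = (t - t⁻¹)/2 := by
    rw [Complex.sinh, ← Complex.exp_neg, ht]
  have ht0 : t ≠ 0 := Complex.exp_ne_zero _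
  have h2' : ((d:ℂ) + Complex.I*n) ≠ 0 := by
    intro h; apply h2; rw [← neg_eq_zero, ← h]; ring
  have hfac : ((d:ℂ)^2 + (n:ℂ)^2) = ((d:ℂ) - Complex.I*n) * ((d:ℂ) + Complex.I*n) := by
    ring_nf
    rw [Complex.I_sq]
    ring
  have key : 1/((d:ℂ) - Complex.I*n) + 1/((d:ℂ) + Complex.I*n)
      = 2*(d:ℂ)/((d:ℂ)^2+(n:ℂ)^2) := by
    rw [div_add_div _ _ h1 h2', ← hfac]
    congr 1
    ring
  rw [hexp1, hexp2, hexp3, hexp4]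
  have gen : ∀ p q : ℂ, p ≠ 0 → q ≠ 0 →
      ((t*t - 1)/p * t⁻¹ + (((t*t)⁻¹ - 1)/(-q)) * t)/2
        = (t - t⁻¹)/2 * (1/p + 1/q) := by
    intro p q hp hq
    have A : ((t*t : ℂ) - 1) * t⁻¹ = t - t⁻¹ := by
      rw [sub_mul, mul_assoc, mul_inv_cancel₀ ht0, mul_one, one_mul]
    have B : (((t*t)⁻¹ : ℂ) - 1) * t = t⁻¹ - t := by
      rw [mul_inv, sub_mul, mul_assoc, inv_mul_cancel₀ ht0, mul_one, one_mul]
    rw [div_mul_eq_mul_div, div_mul_eq_mul_div, A, B, div_neg]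
    ring
  have hq : (-(d:ℂ) - Complex.I*n) = -((d:ℂ) + Complex.I*n) := by ring
  rw [hq, gen _ _ h1 h2', key, hsinh]
  ring

lemma hab' : (0:ℝ) < 0 + 2*π := by positivity

set_option maxHeartbeats 1000000 in
lemma fourierCoeffOn_cosh (d : ℝ) (hd : 0 < d) (n : ℤ) :
    fourierCoeffOn hab' (fun x : ℝ => Complex.cosh (d * (x - π))) n
      = ((d * Real.sinh (π*d) / (π * (d^2 + (n:ℝ)^2)) : ℝ) : ℂ) := by
  have hdn : ((d:ℂ)^2 + (n:ℂ)^2) ≠ 0 := by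
    have h : ((d:ℂ)^2 + (n:ℂ)^2) = ((d^2 + (n:ℝ)^2 : ℝ) : ℂ) := by push_cast; ring
    rw [h]
    exact_mod_cast (by positivity : (0:ℝ) < d^2 + (n:ℝ)^2).ne'
  rw [fourierCoeffOn_eq_integral]
  simp only [fourier_coe_apply, smul_eq_mul, sub_zero, zero_add]
  have heq : Set.EqOn (fun x : ℝ =>
        Complex.exp (2*(π:ℂ)*Complex.I*((-n : ℤ):ℂ)*(x:ℝ)/((2*π : ℝ):ℂ))
          * Complex.cosh (d * (x - π)))
      (fun x : ℝ => Complex.exp (-(Complex.I*n*x)) * Complex.cosh (d * (x - π)))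
      (Set.uIcc (0:ℝ) (2*π)) := by
    intro x _
    simp only
    congr 2
    push_cast
    have hπ : ((π:ℝ):ℂ) ≠ 0 := Complex.ofReal_ne_zero.mpr Real.pi_ne_zero
    field_simp
  rw [intervalIntegral.integral_congr heq, integral_key d hd n, Complex.real_smul]
  have hπ : ((π:ℝ):ℂ) ≠ 0 := Complex.ofReal_ne_zero.mpr Real.pi_ne_zero
  push_cast
  field_simp


lemma summable_int_aux (d : ℝ) (hd : 0 < d) :
    Summable (fun n : ℤ => d * Real.sinh (π*d) / (π * (d^2 + (n:ℝ)^2))) := by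
  have hnat : Summable (fun k : ℕ => 1 / (d^2 + (k:ℝ)^2)) := by
    rw [← summable_nat_add_iff 1]
    refine Summable.of_nonneg_of_le (fun k => by positivity) (fun k => ?_)
      ((summable_nat_add_iff 1).mpr (summable_one_div_nat_pow.mpr (le_refl 2)))
    have h1 : (0:ℝ) < ((k+1 : ℕ):ℝ)^2 := by positivity
    apply one_div_le_one_div_of_le h1
    nlinarith [sq_nonneg d]
  have hint : Summable (fun n : ℤ => 1 / (d^2 + (n:ℝ)^2)) := by
    refine Summable.of_nat_of_neg (hnat.congr fun k => by push_cast; ring)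
      (hnat.congr fun k => by push_cast; ring)
  exact (hint.mul_left (d * Real.sinh (π*d) / π)).congr fun n => by
    rw [mul_one_div, div_div]

lemma hasSum_odd (d : ℝ) (hd : 0 < d) :
    HasSum (fun k : ℕ => 4*(d*Real.sinh (π*d)/π) / (d^2 + (2*(k:ℝ)+1)^2))
      (Real.cosh (π*d) - 1) := by
  haveI : Fact (0 < 2*π) := ⟨by positivity⟩
  set f : ℝ → ℂ := fun x : ℝ => Complex.cosh (d * (x - π)) with hf
  have hper : f 0 = f (2*π) := by
    show Complex.cosh _ = Complex.cosh _
    rw [show (d:ℂ) * (((0:ℝ):ℂ) - π) = -(d*π) by push_cast; ring,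
      show (d:ℂ) * (((2*π:ℝ):ℂ) - π) = d*π by push_cast; ring, Complex.cosh_neg]
  have hcont : Continuous (AddCircle.liftIco (2*π) 0 f) :=
    AddCircle.liftIco_zero_continuous hper (Continuous.continuousOn (by fun_prop))
  set F : C(AddCircle (2*π), ℂ) := ⟨AddCircle.liftIco (2*π) 0 f, hcont⟩ with hFdef
  have hF : ∀ n : ℤ, fourierCoeff (⇑F) n
      = ((d * Real.sinh (π*d) / (π * (d^2 + (n:ℝ)^2)) : ℝ) : ℂ) := by
    intro n
    show fourierCoeff (AddCircle.liftIco (2*π) 0 f) n = _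
    rw [fourierCoeff_liftIco_eq f n]
    exact fourierCoeffOn_cosh d hd n
  have hsummable : Summable (fun n : ℤ => fourierCoeff (⇑F) n) := by
    refine Summable.congr ?_ (fun n => (hF n).symm)
    exact (Complex.summable_ofReal).mpr (summable_int_aux d hd)
  -- evaluation at 0
  have h0 : HasSum (fun n : ℤ => ((d * Real.sinh (π*d) / (π * (d^2 + (n:ℝ)^2)) : ℝ) : ℂ))
      ((Real.cosh (π*d) : ℝ) : ℂ) := by
    have := has_pointwise_sum_fourier_series_of_summable hsummable (((0:ℝ) : AddCircle (2*π)))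
    have hF0 : F (((0:ℝ) : AddCircle (2*π))) = ((Real.cosh (π*d) : ℝ) : ℂ) := by
      show AddCircle.liftIco (2*π) 0 f ((0:ℝ) : AddCircle (2*π)) = _
      rw [AddCircle.liftIco_zero_coe_apply (by constructor <;> [rfl; positivity])]
      show Complex.cosh _ = _
      rw [show (d:ℂ) * (((0:ℝ):ℂ) - π) = ((-(π*d) : ℝ) : ℂ) by push_cast; ring,
        ← Complex.ofReal_cosh, Real.cosh_neg]
    rw [hF0] at this
    refine this.congr_fun fun n => ?_
    rw [hF n, show ((0:ℝ) : AddCircle (2*π)) = (0 : AddCircle (2*π)) by norm_num,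
      fourier_eval_zero, smul_eq_mul, mul_one]
  -- evaluation at π
  have hπ : HasSum (fun n : ℤ =>
      ((d * Real.sinh (π*d) / (π * (d^2 + (n:ℝ)^2)) : ℝ) : ℂ) * (-1)^n) 1 := by
    have := has_pointwise_sum_fourier_series_of_summable hsummable (((π:ℝ) : AddCircle (2*π)))
    have hFπ : F (((π:ℝ) : AddCircle (2*π))) = 1 := by
      show AddCircle.liftIco (2*π) 0 f ((π:ℝ) : AddCircle (2*π)) = _
      rw [AddCircle.liftIco_zero_coe_apply (by constructor <;> [positivity;
        nlinarith [Real.pi_pos]])]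
      show Complex.cosh _ = _
      rw [show (d:ℂ) * (((π:ℝ):ℂ) - π) = 0 by push_cast; ring, Complex.cosh_zero]
    rw [hFπ] at this
    refine this.congr_fun fun n => ?_
    have hfour : fourier n (((π:ℝ) : AddCircle (2*π))) = (-1)^n := by
      rw [fourier_coe_apply]
      rw [show 2*(π:ℂ)*Complex.I*(n:ℂ)*((π:ℝ):ℂ)/(((2*π : ℝ)):ℂ) = (n:ℂ)*((π:ℝ)*Complex.I) by
        push_cast
        have hπ0 : ((π:ℝ):ℂ) ≠ 0 := Complex.ofReal_ne_zero.mpr Real.pi_ne_zero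
        field_simp]
      rw [Complex.exp_int_mul]
      norm_num [Complex.exp_pi_mul_I]
    rw [hF n, hfour, smul_eq_mul]
  -- subtract
  set c : ℤ → ℝ := fun n => d * Real.sinh (π*d) / (π * (d^2 + (n:ℝ)^2)) with hc
  have hsub : HasSum (fun n : ℤ => ((c n : ℝ) : ℂ) * (1 - (-1)^n))
      (((Real.cosh (π*d) : ℝ) : ℂ) - 1) := by
    refine (h0.sub hπ).congr_fun fun n => ?_
    ring
  have hnat : HasSum (fun k : ℕ => ((c k : ℝ) : ℂ) * (1 - (-1)^(k:ℤ))
      + ((c (-(k:ℤ)) : ℝ) : ℂ) * (1 - (-1)^(-(k:ℤ))))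
      ((((Real.cosh (π*d) : ℝ) : ℂ) - 1) + ((c 0 : ℝ) : ℂ) * (1 - (-1)^(0:ℤ))) :=
    hsub.nat_add_neg
  rw [show ((c 0 : ℝ) : ℂ) * (1 - (-1)^(0:ℤ)) = 0 by norm_num, add_zero] at hnat
  -- restrict to odd indices
  have hinj : Function.Injective (fun k : ℕ => 2*k+1) := fun a b h => by
    simp only at h; omega
  have hzero : ∀ m ∉ Set.range (fun k : ℕ => 2*k+1),
      ((c m : ℝ) : ℂ) * (1 - (-1)^(m:ℤ)) + ((c (-(m:ℤ)) : ℝ) : ℂ) * (1 - (-1)^(-(m:ℤ))) = 0 := by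
    intro m hm
    have hme : Even m := by
      rcases Nat.even_or_odd m with h | h
      · exact h
      · obtain ⟨k, hk⟩ := h
        exact absurd ⟨k, by simp only; omega⟩ hm
    have h1 : Even (m : ℤ) := Int.even_coe_nat m |>.mpr hme
    rw [Even.neg_one_zpow h1, Even.neg_one_zpow h1.neg]
    norm_num
  have hodd := (hinj.hasSum_iff hzero).mpr hnat
  -- identify the odd terms
  have hterm : ∀ k : ℕ,
      ((c ((2*k+1 : ℕ) : ℤ) : ℝ) : ℂ) * (1 - (-1)^(((2*k+1 : ℕ) : ℤ)))
        + ((c (-((2*k+1 : ℕ) : ℤ)) : ℝ) : ℂ) * (1 - (-1)^(-((2*k+1 : ℕ) : ℤ)))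
      = ((4*(d*Real.sinh (π*d)/π) / (d^2 + (2*(k:ℝ)+1)^2) : ℝ) : ℂ) := by
    intro k
    have hoddm : Odd ((2*k+1 : ℕ) : ℤ) := ⟨k, by push_cast; ring⟩
    rw [Odd.neg_one_zpow hoddm, zpow_neg, Odd.neg_one_zpow hoddm]
    rw [hc]
    simp only
    push_cast
    have hπ0 : ((π:ℝ):ℂ) ≠ 0 := Complex.ofReal_ne_zero.mpr Real.pi_ne_zero
    have hden : ((d:ℂ)^2 + (2*(k:ℝ)+1:ℂ)^2) ≠ 0 := by
      have h : ((d:ℂ)^2 + (2*(k:ℝ)+1:ℂ)^2) = ((d^2 + (2*(k:ℝ)+1)^2 : ℝ) : ℂ) := by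
        push_cast; ring
      rw [h]
      exact_mod_cast (by positivity : (0:ℝ) < d^2 + (2*(k:ℝ)+1)^2).ne'
    norm_num
    field_simp
    ring
  have hfinalC : HasSum
      (fun k : ℕ => ((4*(d*Real.sinh (π*d)/π) / (d^2 + (2*(k:ℝ)+1)^2) : ℝ) : ℂ))
      (((Real.cosh (π*d) - 1 : ℝ)) : ℂ) := by
    rw [Complex.ofReal_sub, Complex.ofReal_one]
    exact hodd.congr_fun (fun k => (hterm k).symm)
  exact Complex.hasSum_ofReal.mp hfinalC

lemma hasSum_half (c : ℝ) (hc : 0 < c) :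
    HasSum (fun k : ℕ => 1 / (c^2 + ((k:ℝ)+1/2)^2))
      ((Real.cosh (π*(2*c)) - 1) / (2*c*Real.sinh (π*(2*c))/π)) := by
  have hK : 0 < 2*c*Real.sinh (π*(2*c))/π := by
    have := Real.sinh_pos_iff.mpr (by positivity : (0:ℝ) < π*(2*c))
    positivity
  have h := (hasSum_odd (2*c) (by positivity)).div_const (2*c*Real.sinh (π*(2*c))/π)
  refine h.congr_fun fun k => ?_
  have hden : (0:ℝ) < (2*c)^2 + (2*(k:ℝ)+1)^2 := by positivity
  have hden2 : (0:ℝ) < c^2 + ((k:ℝ)+1/2)^2 := by positivity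
  field_simp
  ring

lemma half_sum_le (c : ℝ) (hc : 0 < c) :
    (Real.cosh (π*(2*c)) - 1) / (2*c*Real.sinh (π*(2*c))/π) ≤ π/(2*c) := by
  set x := π*(2*c) with hx
  have hx0 : 0 < x := by positivity
  have hs : 0 < Real.sinh x := Real.sinh_pos_iff.mpr hx0
  have hπ := Real.pi_pos
  have h1 : Real.cosh x - 1 ≤ Real.sinh x := by
    have h2 := Real.cosh_sub_sinh x
    have h3 : Real.exp (-x) ≤ 1 := Real.exp_le_one_iff.mpr (by linarith)
    linarith
  rw [div_le_div_iff₀ (by positivity) (by positivity)]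
  have hexp : π * (2*c*Real.sinh x/π) = 2*c*Real.sinh x := by field_simp
  rw [hexp]
  nlinarith

end CarlsonLandauAux

/-- Landau's improvement of Carlson's inequality:
`(Σ_{k≥1} a_k)² ≤ π (Σ a_k²)^{1/2} (Σ (k−1/2)² a_k²)^{1/2}`.
The sequence is indexed by `k : ℕ`, where `a k` represents `a_{k+1}`,
so the weight `(k − 1/2)²` becomes `((k : ℝ) + 1/2)²`. -/
theorem carlson_landau_inequality
    (a : ℕ → ℝ) (ha : ∀ k, 0 ≤ a k)
    (hsum : Summable (fun k : ℕ => ((k : ℝ) + 1/2) ^ 2 * a k ^ 2)) :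
    (∑' k : ℕ, a k) ^ 2 ≤
      π * Real.sqrt (∑' k : ℕ, a k ^ 2) *
        Real.sqrt (∑' k : ℕ, ((k : ℝ) + 1/2) ^ 2 * a k ^ 2) := by
  have hπ := Real.pi_pos
  by_cases hsa : Summable a
  swap
  · rw [tsum_eq_zero_of_not_summable hsa]
    have : (0:ℝ) ≤ π * Real.sqrt (∑' k : ℕ, a k ^ 2) *
        Real.sqrt (∑' k : ℕ, ((k : ℝ) + 1/2) ^ 2 * a k ^ 2) := by positivity
    simpa using this
  set A := ∑' k : ℕ, a k ^ 2 with hAdef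
  set B := ∑' k : ℕ, ((k : ℝ) + 1/2) ^ 2 * a k ^ 2 with hBdef
  have hA : Summable (fun k : ℕ => a k ^ 2) := by
    refine Summable.of_nonneg_of_le (fun k => sq_nonneg _) (fun k => ?_) (hsum.mul_left 4)
    have hk : (1:ℝ)/4 ≤ ((k:ℝ)+1/2)^2 := by
      nlinarith [(Nat.cast_nonneg k : (0:ℝ) ≤ k)]
    nlinarith [mul_le_mul_of_nonneg_right hk (sq_nonneg (a k))]
  have hA0 : 0 ≤ A := tsum_nonneg fun k => sq_nonneg _
  rcases eq_or_lt_of_le hA0 with h0 | hApos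
  · -- A = 0, so a = 0
    have hzero : ∀ k, a k = 0 := by
      intro k
      have h1 : a k ^ 2 ≤ A := Summable.le_tsum hA k fun j _ => sq_nonneg _
      have h2 := sq_nonneg (a k)
      have : a k ^ 2 = 0 := le_antisymm (by rw [← h0] at h1; exact h1) h2
      exact pow_eq_zero_iff (by norm_num) |>.mp this
    have : (∑' k : ℕ, a k) = 0 := by
      have : (fun k : ℕ => a k) = fun _ => (0:ℝ) := funext hzero
      rw [this, tsum_zero]
    rw [this]
    have : (0:ℝ) ≤ π * Real.sqrt A * Real.sqrt B := by positivity
    simpa using this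
  · -- A > 0
    have hB0 : 0 < B := by
      have h1 : (1/4 : ℝ) * A = ∑' k : ℕ, (1/4) * a k ^ 2 := (tsum_mul_left).symm
      have h2 : (∑' k : ℕ, (1/4) * a k ^ 2) ≤ B := by
        refine Summable.tsum_le_tsum (fun k => ?_) (hA.mul_left (1/4)) hsum
        have hk : (1:ℝ)/4 ≤ ((k:ℝ)+1/2)^2 := by
          nlinarith [(Nat.cast_nonneg k : (0:ℝ) ≤ k)]
        nlinarith [mul_le_mul_of_nonneg_right hk (sq_nonneg (a k))]
      nlinarith
    set r := Real.sqrt B / Real.sqrt A with hrdef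
    have hsA : 0 < Real.sqrt A := Real.sqrt_pos.mpr hApos
    have hsB : 0 < Real.sqrt B := Real.sqrt_pos.mpr hB0
    have hr : 0 < r := div_pos hsB hsA
    have hkey := hasSum_half r hr
    have hVle := half_sum_le r hr
    -- the weighted dual series
    have hu : HasSum (fun k : ℕ => r / (r^2 + ((k:ℝ)+1/2)^2))
        (r * ((Real.cosh (π*(2*r)) - 1) / (2*r*Real.sinh (π*(2*r))/π))) := by
      refine (hkey.mul_left r).congr_fun fun k => ?_
      rw [mul_one_div]
    have husum : (∑' k : ℕ, r / (r^2 + ((k:ℝ)+1/2)^2)) ≤ π/2 := by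
      rw [hu.tsum_eq]
      calc r * ((Real.cosh (π*(2*r)) - 1) / (2*r*Real.sinh (π*(2*r))/π))
          ≤ r * (π/(2*r)) := by
            exact mul_le_mul_of_nonneg_left hVle hr.le
        _ = π/2 := by field_simp
    -- the weighted series of a
    have hv : Summable (fun k : ℕ => (r^2 + ((k:ℝ)+1/2)^2)/r * a k ^ 2) := by
      refine ((hA.mul_left r).add (hsum.mul_left (1/r))).congr fun k => ?_
      field_simp
    have hvsum : (∑' k : ℕ, (r^2 + ((k:ℝ)+1/2)^2)/r * a k ^ 2)
        = 2 * (Real.sqrt A * Real.sqrt B) := by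
      have h1 : (fun k : ℕ => (r^2 + ((k:ℝ)+1/2)^2)/r * a k ^ 2)
          = fun k : ℕ => r * a k ^ 2 + (1/r) * (((k:ℝ)+1/2)^2 * a k ^ 2) := by
        funext k; field_simp
      rw [h1, Summable.tsum_add (hA.mul_left r) (hsum.mul_left (1/r)), tsum_mul_left, tsum_mul_left,
        ← hAdef, ← hBdef]
      have hmsA : Real.sqrt A * Real.sqrt A = A := Real.mul_self_sqrt hA0
      have hmsB : Real.sqrt B * Real.sqrt B = B := Real.mul_self_sqrt hB0.le
      have key2 : ∀ sA sB A B : ℝ, 0 < sA → 0 < sB → sA*sA = A → sB*sB = B →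
          (sB/sA)*A + (1/(sB/sA))*B = 2*(sA*sB) := by
        intro sA sB A B h1 h2 e1 e2
        subst e1; subst e2
        field_simp
        ring
      exact key2 _ _ _ _ hsA hsB hmsA hmsB
    -- Cauchy-Schwarz on partial sums
    have hbound : ∀ n : ℕ, (∑ k ∈ Finset.range n, a k)
        ≤ Real.sqrt (π * Real.sqrt A * Real.sqrt B) := by
      intro n
      have hw : ∀ k : ℕ, (0:ℝ) < r^2 + ((k:ℝ)+1/2)^2 := fun k => by positivity
      have hcs := Finset.sum_mul_sq_le_sq_mul_sq (Finset.range n)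
        (fun k => Real.sqrt (r / (r^2 + ((k:ℝ)+1/2)^2)))
        (fun k => Real.sqrt ((r^2 + ((k:ℝ)+1/2)^2)/r * a k ^ 2))
      have hterm : ∀ k : ℕ, Real.sqrt (r / (r^2 + ((k:ℝ)+1/2)^2))
          * Real.sqrt ((r^2 + ((k:ℝ)+1/2)^2)/r * a k ^ 2) = a k := by
        intro k
        rw [← Real.sqrt_mul (by positivity)]
        have : r / (r^2 + ((k:ℝ)+1/2)^2) * ((r^2 + ((k:ℝ)+1/2)^2)/r * a k ^ 2)
            = a k ^ 2 := by
          field_simp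
        rw [this, Real.sqrt_sq (ha k)]
      have hsq1 : ∀ k : ℕ, (Real.sqrt (r / (r^2 + ((k:ℝ)+1/2)^2)))^2
          = r / (r^2 + ((k:ℝ)+1/2)^2) := fun k => Real.sq_sqrt (by positivity)
      have hsq2 : ∀ k : ℕ, (Real.sqrt ((r^2 + ((k:ℝ)+1/2)^2)/r * a k ^ 2))^2
          = (r^2 + ((k:ℝ)+1/2)^2)/r * a k ^ 2 := fun k => Real.sq_sqrt (by positivity)
      simp only [hterm, hsq1, hsq2] at hcs
      have hle1 : (∑ k ∈ Finset.range n, r / (r^2 + ((k:ℝ)+1/2)^2))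
          ≤ π/2 := le_trans (Summable.sum_le_tsum _ (fun k _ => by positivity) (hu.summable)) husum
      have hle2 : (∑ k ∈ Finset.range n, (r^2 + ((k:ℝ)+1/2)^2)/r * a k ^ 2)
          ≤ 2 * (Real.sqrt A * Real.sqrt B) := by
        rw [← hvsum]
        exact Summable.sum_le_tsum _ (fun k _ => by positivity) hv
      have hs1nn : (0:ℝ) ≤ ∑ k ∈ Finset.range n, r / (r^2 + ((k:ℝ)+1/2)^2) :=
        Finset.sum_nonneg fun k _ => by positivity
      have hs2nn : (0:ℝ) ≤ ∑ k ∈ Finset.range n, (r^2 + ((k:ℝ)+1/2)^2)/r * a k ^ 2 :=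
        Finset.sum_nonneg fun k _ => by positivity
      have hfinal : (∑ k ∈ Finset.range n, a k)^2 ≤ π * Real.sqrt A * Real.sqrt B := by
        calc (∑ k ∈ Finset.range n, a k)^2
            ≤ (∑ k ∈ Finset.range n, r / (r^2 + ((k:ℝ)+1/2)^2))
              * (∑ k ∈ Finset.range n, (r^2 + ((k:ℝ)+1/2)^2)/r * a k ^ 2) := hcs
          _ ≤ (π/2) * (2 * (Real.sqrt A * Real.sqrt B)) := by
              apply mul_le_mul hle1 hle2 hs2nn (by positivity)
          _ = π * Real.sqrt A * Real.sqrt B := by ring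
      have hsumnn : (0:ℝ) ≤ ∑ k ∈ Finset.range n, a k :=
        Finset.sum_nonneg fun k _ => ha k
      calc (∑ k ∈ Finset.range n, a k)
          = Real.sqrt ((∑ k ∈ Finset.range n, a k)^2) := (Real.sqrt_sq hsumnn).symm
        _ ≤ Real.sqrt (π * Real.sqrt A * Real.sqrt B) := Real.sqrt_le_sqrt hfinal
    have htsum : (∑' k : ℕ, a k) ≤ Real.sqrt (π * Real.sqrt A * Real.sqrt B) :=
      Real.tsum_le_of_sum_range_le ha hbound
    have htnn : (0:ℝ) ≤ ∑' k : ℕ, a k := tsum_nonneg ha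
    calc (∑' k : ℕ, a k)^2
        ≤ (Real.sqrt (π * Real.sqrt A * Real.sqrt B))^2 := by
          exact pow_le_pow_left₀ htnn htsum 2
      _ = π * Real.sqrt A * Real.sqrt B := Real.sq_sqrt (by positivity)
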